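/- Let p, π₀ ∈ (0,1) and γ₁ ∈ ℝ, and set E = exp(γ₁), B = (p − π₀)·E + p + π₀ − 1, and X = ( −B + √(B² + 4·E·p·(1−p)) ) / (2·E·p). Then X > 0 and π₀/(1+X) + (1−π₀)/(1+X·E) = p. -/
import Mathlib


/-- **Appendix A of the paper.**  For `p, π₀ ∈ (0,1)` and `γ₁ ∈ ℝ`, with
`E = exp(γ₁)`, `B = (p − π₀)E + p + π₀ − 1` and
`X = (−B + √(B² + 4·E·p·(1−p))) / (2·E·p)`, the number `X` is positive and solves
`π₀/(1+X) + (1−π₀)/(1+X·E) = p`, i.e. `X = exp(γ̂₀)` is the closed-form root of the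
logistic missingness model's intercept equation. -/
theorem logistic_intercept_closed_form (p π₀ γ₁ : ℝ)
    (hp : 0 < p) (hp1 : p < 1) (hπ : 0 < π₀) (hπ1 : π₀ < 1)
    (E B X : ℝ)
    (hE : E = Real.exp γ₁)
    (hB : B = (p - π₀) * E + p + π₀ - 1)
    (hX : X = (-B + Real.sqrt (B ^ 2 + 4 * E * p * (1 - p))) / (2 * E * p)) :
    0 < X ∧ π₀ / (1 + X) + (1 - π₀) / (1 + X * E) = p := by
  have hEpos : 0 < E := hE ▸ Real.exp_pos γ₁
  set s := Real.sqrt (B ^ 2 + 4 * E * p * (1 - p)) with hs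
  have hpos : 0 < 4 * E * p * (1 - p) := by nlinarith [mul_pos (mul_pos hEpos hp) (by linarith : (0:ℝ) < 1 - p)]
  have hDnn : 0 ≤ B ^ 2 + 4 * E * p * (1 - p) := by nlinarith [sq_nonneg B]
  have hs2 : s ^ 2 = B ^ 2 + 4 * E * p * (1 - p) := Real.sq_sqrt hDnn
  have hsnn : 0 ≤ s := Real.sqrt_nonneg _
  have hnum : 0 < -B + s := by nlinarith [sq_nonneg (s - B), sq_nonneg (s + B)]
  have hXpos : 0 < X := by
    rw [hX]; exact div_pos hnum (by nlinarith [mul_pos hEpos hp])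
  refine ⟨hXpos, ?_⟩
  have hden : (2 : ℝ) * E * p ≠ 0 := ne_of_gt (by nlinarith [mul_pos hEpos hp])
  have hquad : p * E * X ^ 2 + B * X = 1 - p := by
    rw [hX]; field_simp; nlinarith [hs2]
  have h1 : (0:ℝ) < 1 + X := by linarith
  have h2 : (0:ℝ) < 1 + X * E := by nlinarith [mul_pos hXpos hEpos]
  field_simp
  nlinarith [hquad, hB]
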